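/- Let X ∈ ℝ^{n×p} and Y ∈ ℝⁿ with columns of X and Y centered. Let W ∈ ℝ^{n×(n−1)} satisfy Wᵀ W = I_{n−1} and Wᵀ 1_n = 0. Let Q be Haar-distributed on O(n−1) and set Ỹ = W Q Wᵀ Y and β̃ = (1/n) Xᵀ Ỹ. Then E[β̃] = 0 and E[β̃ β̃ᵀ] = (μ₂/(n(n−1))) (WᵀX)ᵀ (WᵀX), where μ₂ = (1/n)∑ Y_i². In particular E[β̃_g β̃_h] = μ₂ X̄_{gh}/(n−1) with X̄_{gh} = (1/n)∑_i X_{gi} X_{hi}, matching the permutation moments. -/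

import Mathlib

open MeasureTheory Matrix
set_option maxHeartbeats 1000000
set_option synthInstance.maxHeartbeats 200000
set_option linter.unusedSectionVars false
set_option linter.unnecessarySeqFocus false

variable {m : ℕ}



lemma cont_coe : Continuous (fun Q : orthogonalGroup (Fin m) ℝ => (Q : Matrix (Fin m) (Fin m) ℝ)) :=
  continuous_subtype_val

instance og_topGroup : IsTopologicalGroup (orthogonalGroup (Fin m) ℝ) where
  continuous_mul := by
    apply continuous_induced_rng.2
    exact ((continuous_subtype_val.comp continuous_fst).matrix_mul
      (continuous_subtype_val.comp continuous_snd))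
  continuous_inv := by
    apply continuous_induced_rng.2
    exact continuous_subtype_val.matrix_transpose

instance og_compact : CompactSpace (orthogonalGroup (Fin m) ℝ) := by
  suffices h : IsCompact ((orthogonalGroup (Fin m) ℝ : Set (Matrix (Fin m) (Fin m) ℝ))) from
    isCompact_iff_compactSpace.mp h
  have hclosed : IsClosed ((orthogonalGroup (Fin m) ℝ : Set (Matrix (Fin m) (Fin m) ℝ))) := by
    have : (orthogonalGroup (Fin m) ℝ : Set (Matrix (Fin m) (Fin m) ℝ)) =
        (fun A : Matrix (Fin m) (Fin m) ℝ => (star A * A, A * star A)) ⁻¹' {(1, 1)} := by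
      ext A
      simp [Unitary.mem_iff, Set.mem_preimage, Prod.ext_iff]
    rw [this]
    have hc : Continuous (fun A : Matrix (Fin m) (Fin m) ℝ => (star A * A, A * star A)) := by
      have hs : Continuous (fun A : Matrix (Fin m) (Fin m) ℝ => star A) :=
        continuous_id.matrix_conjTranspose
      exact (hs.matrix_mul continuous_id).prodMk (continuous_id.matrix_mul hs)
    exact IsClosed.preimage hc isClosed_singleton
  have hsub : (orthogonalGroup (Fin m) ℝ : Set (Matrix (Fin m) (Fin m) ℝ)) ⊆
      Set.pi Set.univ (fun _ : Fin m => Set.pi Set.univ (fun _ : Fin m => Set.Icc (-1 : ℝ) 1)) := by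
    intro A hA
    intro i _ j _
    have := entry_norm_bound_of_unitary (𝕜 := ℝ) hA i j
    rw [Real.norm_eq_abs, abs_le] at this
    exact this
  exact IsCompact.of_isClosed_subset
    (isCompact_univ_pi (fun _ => isCompact_univ_pi (fun _ => isCompact_Icc))) hclosed hsub

section Haar
variable [MeasurableSpace (orthogonalGroup (Fin m) ℝ)]
  [BorelSpace (orthogonalGroup (Fin m) ℝ)]
  (μ : Measure (orthogonalGroup (Fin m) ℝ))
  [μ.IsHaarMeasure] [IsProbabilityMeasure μ]

lemma og_integrable (f : orthogonalGroup (Fin m) ℝ → ℝ) (hf : Continuous f) :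
    Integrable f μ :=
  hf.integrable_of_hasCompactSupport (HasCompactSupport.of_compactSpace f)

lemma og_right_inv (f : orthogonalGroup (Fin m) ℝ → ℝ) (g : orthogonalGroup (Fin m) ℝ) :
    ∫ Q, f (Q * g) ∂μ = ∫ Q, f Q ∂μ := by
  haveI : LocallyCompactSpace (orthogonalGroup (Fin m) ℝ) := inferInstance
  have hmap : μ.map (· * g) = μ := by
    haveI : IsProbabilityMeasure (μ.map (· * g)) :=
      Measure.isProbabilityMeasure_map ((continuous_mul_right g).measurable.aemeasurable)
    exact MeasureTheory.Measure.isHaarMeasure_eq_of_isProbabilityMeasure _ μ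
  haveI : μ.IsMulRightInvariant := ⟨fun g' => by
    have : μ.map (· * g') = μ := by
      haveI : IsProbabilityMeasure (μ.map (· * g')) :=
        Measure.isProbabilityMeasure_map ((continuous_mul_right g').measurable.aemeasurable)
      exact MeasureTheory.Measure.isHaarMeasure_eq_of_isProbabilityMeasure _ μ
    simpa [Measure.map] using this⟩
  exact integral_mul_right_eq_self f g

lemma og_left_inv (f : orthogonalGroup (Fin m) ℝ → ℝ) (g : orthogonalGroup (Fin m) ℝ) :
    ∫ Q, f (g * Q) ∂μ = ∫ Q, f Q ∂μ :=
  integral_mul_left_eq_self f g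

end Haar


/-- sign flip matrix at index i as an element of the orthogonal group -/
def sgn (i : Fin m) : orthogonalGroup (Fin m) ℝ :=
  ⟨Matrix.diagonal (fun k => if k = i then (-1 : ℝ) else 1), by
    rw [Matrix.mem_unitaryGroup_iff']
    rw [Matrix.star_eq_conjTranspose, Matrix.diagonal_conjTranspose]
    rw [Matrix.diagonal_mul_diagonal]
    ext k l
    by_cases hkl : k = l <;>
      simp [Matrix.diagonal, hkl, Matrix.one_apply] <;> split_ifs <;> norm_num⟩

lemma sgn_coe (i : Fin m) :
    ((sgn i : orthogonalGroup (Fin m) ℝ) : Matrix (Fin m) (Fin m) ℝ)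
      = Matrix.diagonal (fun k => if k = i then (-1 : ℝ) else 1) := rfl

/-- swap permutation matrix as element of the orthogonal group -/
def swp (a b : Fin m) : orthogonalGroup (Fin m) ℝ :=
  ⟨(Equiv.swap a b).toPEquiv.toMatrix, by
    rw [Matrix.mem_unitaryGroup_iff', Matrix.star_eq_conjTranspose]
    have hreal : ((Equiv.swap a b).toPEquiv.toMatrix : Matrix (Fin m) (Fin m) ℝ)ᴴ
        = ((Equiv.swap a b).toPEquiv.toMatrix : Matrix (Fin m) (Fin m) ℝ)ᵀ := by
      ext i j
      simp [Matrix.conjTranspose_apply, PEquiv.toMatrix_apply]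
    rw [hreal, ← PEquiv.toMatrix_symm, ← Equiv.toPEquiv_symm, ← PEquiv.toMatrix_trans,
      ← Equiv.toPEquiv_trans]
    simp⟩

lemma swp_coe (a b : Fin m) :
    ((swp a b : orthogonalGroup (Fin m) ℝ) : Matrix (Fin m) (Fin m) ℝ)
      = (Equiv.swap a b).toPEquiv.toMatrix := rfl

section Moments
variable [MeasurableSpace (orthogonalGroup (Fin m) ℝ)]
  [BorelSpace (orthogonalGroup (Fin m) ℝ)]
  (μ : Measure (orthogonalGroup (Fin m) ℝ))
  [μ.IsHaarMeasure] [IsProbabilityMeasure μ]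

lemma cont_entry (i a : Fin m) :
    Continuous fun Q : orthogonalGroup (Fin m) ℝ => (Q : Matrix (Fin m) (Fin m) ℝ) i a :=
  ((continuous_apply a).comp ((continuous_apply i).comp continuous_subtype_val))

lemma og_m1 (i a : Fin m) : ∫ Q, (Q : Matrix (Fin m) (Fin m) ℝ) i a ∂μ = 0 := by
  have h := og_left_inv μ (fun Q => (Q : Matrix (Fin m) (Fin m) ℝ) i a) (sgn i)
  have hh : ∀ Q : orthogonalGroup (Fin m) ℝ,
      ((sgn i * Q : orthogonalGroup (Fin m) ℝ) : Matrix (Fin m) (Fin m) ℝ) i a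
        = -(Q : Matrix (Fin m) (Fin m) ℝ) i a := by
    intro Q
    rw [Matrix.UnitaryGroup.mul_val, sgn_coe, Matrix.diagonal_mul]
    simp
  simp only [hh] at h
  rw [integral_neg] at h
  linarith

lemma og_m2 {i j : Fin m} (a b : Fin m) (hij : i ≠ j) :
    ∫ Q, (Q : Matrix (Fin m) (Fin m) ℝ) i a * (Q : Matrix (Fin m) (Fin m) ℝ) j b ∂μ = 0 := by
  have h := og_left_inv μ
    (fun Q => (Q : Matrix (Fin m) (Fin m) ℝ) i a * (Q : Matrix (Fin m) (Fin m) ℝ) j b) (sgn i)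
  have hh : ∀ Q : orthogonalGroup (Fin m) ℝ,
      ((sgn i * Q : orthogonalGroup (Fin m) ℝ) : Matrix (Fin m) (Fin m) ℝ) i a
        * ((sgn i * Q : orthogonalGroup (Fin m) ℝ) : Matrix (Fin m) (Fin m) ℝ) j b
        = -((Q : Matrix (Fin m) (Fin m) ℝ) i a * (Q : Matrix (Fin m) (Fin m) ℝ) j b) := by
    intro Q
    rw [Matrix.UnitaryGroup.mul_val, sgn_coe, Matrix.diagonal_mul, Matrix.diagonal_mul]
    rw [if_pos rfl, if_neg hij.symm]
    ring
  simp only [hh] at h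
  rw [integral_neg] at h
  linarith

lemma og_m3 (i : Fin m) {a b : Fin m} (hab : a ≠ b) :
    ∫ Q, (Q : Matrix (Fin m) (Fin m) ℝ) i a * (Q : Matrix (Fin m) (Fin m) ℝ) i b ∂μ = 0 := by
  have h := og_right_inv μ
    (fun Q => (Q : Matrix (Fin m) (Fin m) ℝ) i a * (Q : Matrix (Fin m) (Fin m) ℝ) i b) (sgn a)
  have hh : ∀ Q : orthogonalGroup (Fin m) ℝ,
      ((Q * sgn a : orthogonalGroup (Fin m) ℝ) : Matrix (Fin m) (Fin m) ℝ) i a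
        * ((Q * sgn a : orthogonalGroup (Fin m) ℝ) : Matrix (Fin m) (Fin m) ℝ) i b
        = -((Q : Matrix (Fin m) (Fin m) ℝ) i a * (Q : Matrix (Fin m) (Fin m) ℝ) i b) := by
    intro Q
    rw [Matrix.UnitaryGroup.mul_val, sgn_coe, Matrix.mul_diagonal, Matrix.mul_diagonal]
    rw [if_pos rfl, if_neg hab.symm]
    ring
  simp only [hh] at h
  rw [integral_neg] at h
  linarith

lemma og_m4 (i j a : Fin m) :
    ∫ Q, (Q : Matrix (Fin m) (Fin m) ℝ) i a ^ 2 ∂μ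
      = ∫ Q, (Q : Matrix (Fin m) (Fin m) ℝ) j a ^ 2 ∂μ := by
  have h := og_left_inv μ (fun Q => (Q : Matrix (Fin m) (Fin m) ℝ) i a ^ 2) (swp i j)
  have hh : ∀ Q : orthogonalGroup (Fin m) ℝ,
      ((swp i j * Q : orthogonalGroup (Fin m) ℝ) : Matrix (Fin m) (Fin m) ℝ) i a
        = (Q : Matrix (Fin m) (Fin m) ℝ) j a := by
    intro Q
    rw [Matrix.UnitaryGroup.mul_val, swp_coe, PEquiv.toMatrix_toPEquiv_mul]
    simp [Matrix.submatrix_apply, Equiv.swap_apply_left]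
  simp only [hh] at h
  exact h.symm

lemma og_m5 (i a : Fin m) :
    ∫ Q, (Q : Matrix (Fin m) (Fin m) ℝ) i a ^ 2 ∂μ = 1 / (m : ℝ) := by
  have hsum : ∀ Q : orthogonalGroup (Fin m) ℝ,
      ∑ j, (Q : Matrix (Fin m) (Fin m) ℝ) j a ^ 2 = 1 := by
    intro Q
    have h1 : (star (Q : Matrix (Fin m) (Fin m) ℝ) * (Q : Matrix (Fin m) (Fin m) ℝ)) a a
        = (1 : Matrix (Fin m) (Fin m) ℝ) a a := by
      rw [Matrix.UnitaryGroup.star_mul_self]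
    rw [Matrix.mul_apply] at h1
    simp only [Matrix.star_eq_conjTranspose, Matrix.conjTranspose_apply, star_trivial,
      Matrix.one_apply_eq] at h1
    rw [← h1]
    congr 1
    funext j
    ring
  have hint : ∫ Q, ∑ j, (Q : Matrix (Fin m) (Fin m) ℝ) j a ^ 2 ∂μ = 1 := by
    simp only [hsum]
    simp
  rw [integral_finset_sum] at hint
  · have heach : ∀ j, ∫ Q, (Q : Matrix (Fin m) (Fin m) ℝ) j a ^ 2 ∂μ
        = ∫ Q, (Q : Matrix (Fin m) (Fin m) ℝ) i a ^ 2 ∂μ := fun j => og_m4 μ j i a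
    rw [Finset.sum_congr rfl (fun j _ => heach j), Finset.sum_const] at hint
    simp only [Finset.card_univ, Fintype.card_fin, nsmul_eq_mul] at hint
    have hm : (m : ℝ) ≠ 0 := by
      have : 0 < m := Fin.pos i
      positivity
    field_simp at hint ⊢
    linarith
  · intro j _
    exact og_integrable μ _ (((cont_entry j a)).pow 2)

lemma og_m (i a j b : Fin m) :
    ∫ Q, (Q : Matrix (Fin m) (Fin m) ℝ) i a * (Q : Matrix (Fin m) (Fin m) ℝ) j b ∂μ
      = if i = j ∧ a = b then 1 / (m : ℝ) else 0 := by
  by_cases hij : i = j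
  · subst hij
    by_cases hab : a = b
    · subst hab
      simp only [and_self, if_pos rfl]
      rw [← og_m5 μ i a]
      congr 1
      funext Q
      ring
    · simp only [hab, and_false, if_false]
      exact og_m3 μ i hab
  · simp only [hij, false_and, if_false]
    exact og_m2 μ a b hij

end Moments

lemma WWt_eq (n : ℕ) (hn : 2 ≤ n) (W : Matrix (Fin n) (Fin (n - 1)) ℝ)
    (hW : Wᵀ * W = 1) (hW1 : Wᵀ *ᵥ (fun _ => 1) = 0) :
    ∀ i j : Fin n, ∑ a, W i a * W j a = (if i = j then (1 : ℝ) else 0) - (n : ℝ)⁻¹ := by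
  set J : Matrix (Fin n) (Fin n) ℝ := Matrix.of (fun _ _ => (1 : ℝ)) with hJ
  set A : Matrix (Fin n) (Fin n) ℝ := 1 - (n : ℝ)⁻¹ • J with hA
  set B : Matrix (Fin n) (Fin n) ℝ := W * Wᵀ with hB
  have hn0 : (n : ℝ) ≠ 0 := by positivity
  have hJW : J * W = 0 := by
    ext i a
    have := congr_fun hW1 a
    simp only [Matrix.mulVec, dotProduct, Matrix.transpose_apply, mul_one,
      Pi.zero_apply] at this
    simp [hJ, Matrix.mul_apply, this]
  have hWJ : Wᵀ * J = 0 := by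
    ext a j
    have := congr_fun hW1 a
    simp only [Matrix.mulVec, dotProduct, Matrix.transpose_apply, mul_one,
      Pi.zero_apply] at this
    simp [hJ, Matrix.mul_apply, this]
  have hJJ : J * J = (n : ℝ) • J := by
    ext i j
    simp [hJ, Matrix.mul_apply]
  have hBB : B * B = B := by
    rw [hB, Matrix.mul_assoc W, ← Matrix.mul_assoc Wᵀ, hW, Matrix.one_mul]
  have hAB : A * B = B := by
    rw [hA, hB, Matrix.sub_mul, Matrix.one_mul, Matrix.smul_mul, ← Matrix.mul_assoc, hJW,
      Matrix.zero_mul, smul_zero, sub_zero]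
  have hBA : B * A = B := by
    rw [hA, hB, Matrix.mul_sub, Matrix.mul_one, Matrix.mul_smul, Matrix.mul_assoc, hWJ,
      Matrix.mul_zero, smul_zero, sub_zero]
  have expand : ∀ (a b : Matrix (Fin n) (Fin n) ℝ),
      (a - b) * (a - b) = a * a - a * b - (b * a - b * b) := by
    intro a b; noncomm_ring
  have hc : ((n : ℝ)⁻¹ • J) * ((n : ℝ)⁻¹ • J) = (n : ℝ)⁻¹ • J := by
    rw [smul_mul_assoc, mul_smul_comm, hJJ, smul_smul, smul_smul]
    congr 1
    field_simp
  have hAA : A * A = A := by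
    rw [hA, expand, hc]
    simp only [Matrix.one_mul, Matrix.mul_one]
    abel
  set P : Matrix (Fin n) (Fin n) ℝ := A - B with hP
  have hPP : P * P = P := by
    rw [hP, expand, hAA, hAB, hBA, hBB]
    abel
  have hJt : Jᵀ = J := by
    ext i j
    simp [hJ]
  have hPsymm : Pᵀ = P := by
    rw [hP, Matrix.transpose_sub, hA, hB, Matrix.transpose_sub, Matrix.transpose_one,
      Matrix.transpose_smul, hJt, Matrix.transpose_mul, Matrix.transpose_transpose]
  have htrA : Matrix.trace A = (n : ℝ) - 1 := by
    rw [hA, Matrix.trace_sub, Matrix.trace_smul, Matrix.trace_one]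
    have : Matrix.trace J = (n : ℝ) := by
      simp [hJ, Matrix.trace, Matrix.diag]
    rw [this]
    simp [Fintype.card_fin]
    field_simp
  have htrB : Matrix.trace B = (n : ℝ) - 1 := by
    rw [hB, Matrix.trace_mul_comm, hW, Matrix.trace_one]
    simp only [Fintype.card_fin]
    rw [Nat.cast_sub (by omega)]
    simp
  have htrP : Matrix.trace P = 0 := by
    rw [hP, Matrix.trace_sub, htrA, htrB, sub_self]
  have hsumsq : ∑ i, ∑ j, P i j ^ 2 = 0 := by
    have h1 : Matrix.trace (P * P) = ∑ i, ∑ j, P i j * P j i := by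
      simp [Matrix.trace, Matrix.diag, Matrix.mul_apply]
    have h2 : ∀ i j, P j i = P i j := fun i j => by
      conv_lhs => rw [← hPsymm]
      rfl
    rw [hPP, htrP] at h1
    rw [← h1.symm]
    apply Finset.sum_congr rfl
    intro i _
    apply Finset.sum_congr rfl
    intro j _
    rw [h2 i j]
    ring
  have hPzero : ∀ i j, P i j = 0 := by
    intro i j
    have hnonneg : ∀ i ∈ Finset.univ, (0:ℝ) ≤ ∑ j, P i j ^ 2 := by
      intro i _
      positivity
    have h1 : ∑ j, P i j ^ 2 = 0 := by
      have := (Finset.sum_eq_zero_iff_of_nonneg hnonneg).mp hsumsq i (Finset.mem_univ i)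
      exact this
    have h2 : P i j ^ 2 = 0 := by
      have hnn : ∀ j ∈ Finset.univ, (0:ℝ) ≤ P i j ^ 2 := fun j _ => sq_nonneg _
      exact (Finset.sum_eq_zero_iff_of_nonneg hnn).mp h1 j (Finset.mem_univ j)
    exact pow_eq_zero_iff (by norm_num) |>.mp h2
  intro i j
  have := hPzero i j
  rw [hP, hA, hB, hJ] at this
  simp only [Matrix.sub_apply, Matrix.smul_apply, Matrix.one_apply, Matrix.mul_apply,
    Matrix.transpose_apply, Matrix.of_apply, smul_eq_mul, mul_one] at this
  have : (if i = j then (1:ℝ) else 0) - (n:ℝ)⁻¹ - ∑ a, W i a * W j a = 0 := this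
  linarith

lemma WWt_eq' (n : ℕ) (hn : 2 ≤ n) (W : Matrix (Fin n) (Fin (n - 1)) ℝ)
    (hW : Wᵀ * W = 1) (hW1 : Wᵀ *ᵥ (fun _ => 1) = 0)
    (hWWt : ∀ i j : Fin n, ∑ a, W i a * W j a = (if i = j then (1 : ℝ) else 0) - (n : ℝ)⁻¹)
    (u w : Fin n → ℝ) (hw : ∑ i, w i = 0) :
    ∑ a, (Wᵀ *ᵥ u) a * (Wᵀ *ᵥ w) a = ∑ i, u i * w i := by
  have h1 : ∀ a, (Wᵀ *ᵥ u) a = ∑ i, W i a * u i := by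
    intro a; simp [Matrix.mulVec, dotProduct, Matrix.transpose_apply]
  have h2 : ∀ a, (Wᵀ *ᵥ w) a = ∑ i, W i a * w i := by
    intro a; simp [Matrix.mulVec, dotProduct, Matrix.transpose_apply]
  calc ∑ a, (Wᵀ *ᵥ u) a * (Wᵀ *ᵥ w) a
      = ∑ a, ∑ i, ∑ j, (W i a * u i) * (W j a * w j) := by
        apply Finset.sum_congr rfl; intro a _
        rw [h1, h2, Finset.sum_mul_sum]
    _ = ∑ i, ∑ j, ∑ a, (W i a * u i) * (W j a * w j) := by
        rw [Finset.sum_comm]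
        apply Finset.sum_congr rfl; intro i _
        rw [Finset.sum_comm]
    _ = ∑ i, ∑ j, (u i * w j) * ∑ a, W i a * W j a := by
        apply Finset.sum_congr rfl; intro i _
        apply Finset.sum_congr rfl; intro j _
        rw [Finset.mul_sum]
        apply Finset.sum_congr rfl; intro a _
        ring
    _ = ∑ i, ∑ j, (u i * w j) * ((if i = j then (1 : ℝ) else 0) - (n : ℝ)⁻¹) := by
        apply Finset.sum_congr rfl; intro i _
        apply Finset.sum_congr rfl; intro j _
        rw [hWWt]
    _ = ∑ i, (u i * w i - (n : ℝ)⁻¹ * u i * ∑ j, w j) := by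
        apply Finset.sum_congr rfl; intro i _
        rw [Finset.mul_sum]
        simp only [mul_sub]
        rw [Finset.sum_sub_distrib]
        congr 1
        · simp [mul_ite, Finset.sum_ite_eq, mul_comm]
        · apply Finset.sum_congr rfl; intro j _; ring
    _ = ∑ i, u i * w i := by
        apply Finset.sum_congr rfl; intro i _
        rw [hw]
        ring

theorem stmt_17 (n p : ℕ) (hn : 2 ≤ n)
    (X : Matrix (Fin n) (Fin p) ℝ) (Y : Fin n → ℝ)
    (hX : ∀ g : Fin p, ∑ i, X i g = 0) (hY : ∑ i, Y i = 0)
    (W : Matrix (Fin n) (Fin (n - 1)) ℝ)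
    (hW : Wᵀ * W = 1) (hW1 : Wᵀ *ᵥ (fun _ => 1) = 0)
    [MeasurableSpace (orthogonalGroup (Fin (n - 1)) ℝ)]
    [BorelSpace (orthogonalGroup (Fin (n - 1)) ℝ)]
    (μ : Measure (orthogonalGroup (Fin (n - 1)) ℝ))
    [μ.IsHaarMeasure] [IsProbabilityMeasure μ] :
    (∀ g : Fin p,
        ∫ Q, (1 / (n : ℝ))
            * (Xᵀ *ᵥ (W *ᵥ ((Q : Matrix (Fin (n - 1)) (Fin (n - 1)) ℝ) *ᵥ (Wᵀ *ᵥ Y)))) g ∂μ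
          = 0) ∧
    (∀ g h : Fin p,
        ∫ Q, ((1 / (n : ℝ))
              * (Xᵀ *ᵥ (W *ᵥ ((Q : Matrix (Fin (n - 1)) (Fin (n - 1)) ℝ) *ᵥ (Wᵀ *ᵥ Y)))) g)
            * ((1 / (n : ℝ))
              * (Xᵀ *ᵥ (W *ᵥ ((Q : Matrix (Fin (n - 1)) (Fin (n - 1)) ℝ) *ᵥ (Wᵀ *ᵥ Y)))) h) ∂μ
          = ((1 / (n : ℝ)) * ∑ i, (Y i) ^ 2) / ((n : ℝ) * ((n : ℝ) - 1))
              * ((Wᵀ * X)ᵀ * (Wᵀ * X)) g h) ∧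
    (∀ g h : Fin p,
        ∫ Q, ((1 / (n : ℝ))
              * (Xᵀ *ᵥ (W *ᵥ ((Q : Matrix (Fin (n - 1)) (Fin (n - 1)) ℝ) *ᵥ (Wᵀ *ᵥ Y)))) g)
            * ((1 / (n : ℝ))
              * (Xᵀ *ᵥ (W *ᵥ ((Q : Matrix (Fin (n - 1)) (Fin (n - 1)) ℝ) *ᵥ (Wᵀ *ᵥ Y)))) h) ∂μ
          = ((1 / (n : ℝ)) * ∑ i, (Y i) ^ 2)
              * ((1 / (n : ℝ)) * ∑ i, X i g * X i h) / ((n : ℝ) - 1)) := by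
  have hn0 : (n : ℝ) ≠ 0 := by positivity
  have hm1 : ((n - 1 : ℕ) : ℝ) = (n : ℝ) - 1 := by
    rw [Nat.cast_sub (by omega)]; simp
  have hm1pos : (0 : ℝ) < (n : ℝ) - 1 := by
    rw [← hm1]; exact_mod_cast Nat.sub_pos_of_lt hn
  have hWWt := WWt_eq n hn W hW hW1
  set v : Fin (n - 1) → ℝ := Wᵀ *ᵥ Y with hv
  set C : Matrix (Fin (n - 1)) (Fin p) ℝ := Wᵀ * X with hC
  -- expansion lemma
  have hexp : ∀ (g : Fin p) (Q : orthogonalGroup (Fin (n - 1)) ℝ),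
      (Xᵀ *ᵥ (W *ᵥ ((Q : Matrix (Fin (n - 1)) (Fin (n - 1)) ℝ) *ᵥ v))) g
        = ∑ q : Fin (n - 1) × Fin (n - 1),
            C q.1 g * v q.2 * (Q : Matrix (Fin (n - 1)) (Fin (n - 1)) ℝ) q.1 q.2 := by
    intro g Q
    rw [Matrix.mulVec_mulVec, Matrix.mulVec_mulVec, Fintype.sum_prod_type]
    simp only [Matrix.mulVec, dotProduct, Matrix.mul_apply, Matrix.transpose_apply,
      hC, Finset.sum_mul, Finset.mul_sum]
    rw [Finset.sum_comm]
    apply Finset.sum_congr rfl; intro a _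
    apply Finset.sum_congr rfl; intro b _
    apply Finset.sum_congr rfl; intro i _
    ring
  -- part 1
  have hpart1 : ∀ g : Fin p,
      ∫ Q, (1 / (n : ℝ))
          * (Xᵀ *ᵥ (W *ᵥ ((Q : Matrix (Fin (n - 1)) (Fin (n - 1)) ℝ) *ᵥ v))) g ∂μ = 0 := by
    intro g
    have hfe : (fun Q : orthogonalGroup (Fin (n - 1)) ℝ => (1 / (n : ℝ))
          * (Xᵀ *ᵥ (W *ᵥ ((Q : Matrix (Fin (n - 1)) (Fin (n - 1)) ℝ) *ᵥ v))) g)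
        = fun Q : orthogonalGroup (Fin (n - 1)) ℝ =>
            ∑ q : Fin (n - 1) × Fin (n - 1), (1 / (n : ℝ)) * (C q.1 g * v q.2)
              * (Q : Matrix (Fin (n - 1)) (Fin (n - 1)) ℝ) q.1 q.2 := by
      funext Q
      rw [hexp g Q, Finset.mul_sum]
      apply Finset.sum_congr rfl; intro q _; ring
    rw [hfe, integral_finset_sum]
    · apply Finset.sum_eq_zero; intro q _
      rw [integral_const_mul, og_m1 μ q.1 q.2, mul_zero]
    · intro q _
      exact og_integrable μ _ (continuous_const.mul (cont_entry q.1 q.2))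
  -- part 2 core computation
  have hpart2 : ∀ g h : Fin p,
      ∫ Q, ((1 / (n : ℝ))
            * (Xᵀ *ᵥ (W *ᵥ ((Q : Matrix (Fin (n - 1)) (Fin (n - 1)) ℝ) *ᵥ v))) g)
          * ((1 / (n : ℝ))
            * (Xᵀ *ᵥ (W *ᵥ ((Q : Matrix (Fin (n - 1)) (Fin (n - 1)) ℝ) *ᵥ v))) h) ∂μ
        = (1 / (n : ℝ))^2 * ((n : ℝ) - 1)⁻¹
            * ((∑ a, C a g * C a h) * (∑ b, v b ^ 2)) := by
    intro g h
    have hfe : (fun Q : orthogonalGroup (Fin (n - 1)) ℝ =>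
          ((1 / (n : ℝ)) * (Xᵀ *ᵥ (W *ᵥ ((Q : Matrix (Fin (n - 1)) (Fin (n - 1)) ℝ) *ᵥ v))) g)
          * ((1 / (n : ℝ)) * (Xᵀ *ᵥ (W *ᵥ ((Q : Matrix (Fin (n - 1)) (Fin (n - 1)) ℝ) *ᵥ v))) h))
        = fun Q : orthogonalGroup (Fin (n - 1)) ℝ =>
            ∑ q : Fin (n - 1) × Fin (n - 1), ∑ r : Fin (n - 1) × Fin (n - 1),
              ((1 / (n : ℝ)) * (C q.1 g * v q.2)) * ((1 / (n : ℝ)) * (C r.1 h * v r.2))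
                * ((Q : Matrix (Fin (n - 1)) (Fin (n - 1)) ℝ) q.1 q.2
                  * (Q : Matrix (Fin (n - 1)) (Fin (n - 1)) ℝ) r.1 r.2) := by
      funext Q
      rw [hexp g Q, hexp h Q, Finset.mul_sum, Finset.mul_sum, Finset.sum_mul_sum]
      apply Finset.sum_congr rfl; intro q _
      apply Finset.sum_congr rfl; intro r _
      ring
    rw [hfe]
    rw [integral_finset_sum]
    swap
    · intro q _
      apply integrable_finset_sum
      intro r _
      exact og_integrable μ _ (continuous_const.mul
        ((cont_entry q.1 q.2).mul (cont_entry r.1 r.2)))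
    have hinner : ∀ q : Fin (n - 1) × Fin (n - 1),
        ∫ Q, ∑ r : Fin (n - 1) × Fin (n - 1),
            ((1 / (n : ℝ)) * (C q.1 g * v q.2)) * ((1 / (n : ℝ)) * (C r.1 h * v r.2))
              * ((Q : Matrix (Fin (n - 1)) (Fin (n - 1)) ℝ) q.1 q.2
                * (Q : Matrix (Fin (n - 1)) (Fin (n - 1)) ℝ) r.1 r.2) ∂μ
          = ((1 / (n : ℝ)) * (C q.1 g * v q.2)) * ((1 / (n : ℝ)) * (C q.1 h * v q.2))
              * (1 / ((n - 1 : ℕ) : ℝ)) := by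
      intro q
      rw [integral_finset_sum]
      swap
      · intro r _
        exact og_integrable μ _ (continuous_const.mul
          ((cont_entry q.1 q.2).mul (cont_entry r.1 r.2)))
      have heval : ∀ r : Fin (n - 1) × Fin (n - 1),
          ∫ Q, ((1 / (n : ℝ)) * (C q.1 g * v q.2)) * ((1 / (n : ℝ)) * (C r.1 h * v r.2))
              * ((Q : Matrix (Fin (n - 1)) (Fin (n - 1)) ℝ) q.1 q.2
                * (Q : Matrix (Fin (n - 1)) (Fin (n - 1)) ℝ) r.1 r.2) ∂μ
            = ((1 / (n : ℝ)) * (C q.1 g * v q.2)) * ((1 / (n : ℝ)) * (C r.1 h * v r.2))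
              * (if q = r then 1 / ((n - 1 : ℕ) : ℝ) else 0) := by
        intro r
        rw [integral_const_mul, og_m μ q.1 q.2 r.1 r.2]
        congr 1
        simp [Prod.ext_iff]
      rw [Finset.sum_congr rfl (fun r _ => heval r)]
      simp only [mul_ite, mul_zero, Finset.sum_ite_eq, Finset.mem_univ, if_true]
    rw [Finset.sum_congr rfl (fun q _ => hinner q)]
    rw [Fintype.sum_prod_type]
    rw [Finset.sum_mul_sum]
    rw [Finset.mul_sum]
    apply Finset.sum_congr rfl; intro a _
    rw [Finset.mul_sum]
    apply Finset.sum_congr rfl; intro b _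
    rw [hm1]
    field_simp
  -- key sums
  have keyY : ∑ b, v b ^ 2 = ∑ i, Y i ^ 2 := by
    have := WWt_eq' n hn W hW hW1 hWWt Y Y hY
    rw [hv]
    calc ∑ b, (Wᵀ *ᵥ Y) b ^ 2 = ∑ b, (Wᵀ *ᵥ Y) b * (Wᵀ *ᵥ Y) b := by
          apply Finset.sum_congr rfl; intro b _; ring
      _ = ∑ i, Y i * Y i := this
      _ = ∑ i, Y i ^ 2 := by apply Finset.sum_congr rfl; intro i _; ring
  have hcol : ∀ (a : Fin (n - 1)) (g : Fin p), C a g = (Wᵀ *ᵥ (fun i => X i g)) a := by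
    intro a g
    simp [hC, Matrix.mul_apply, Matrix.mulVec, dotProduct]
  have keyX : ∀ g h : Fin p, ∑ a, C a g * C a h = ∑ i, X i g * X i h := by
    intro g h
    have := WWt_eq' n hn W hW hW1 hWWt (fun i => X i g) (fun i => X i h) (hX h)
    calc ∑ a, C a g * C a h
        = ∑ a, (Wᵀ *ᵥ (fun i => X i g)) a * (Wᵀ *ᵥ (fun i => X i h)) a := by
          apply Finset.sum_congr rfl; intro a _; rw [hcol, hcol]
      _ = ∑ i, X i g * X i h := this
  have hG : ∀ g h : Fin p, (Cᵀ * C) g h = ∑ a, C a g * C a h := by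
    intro g h
    simp [Matrix.mul_apply, Matrix.transpose_apply]
  refine ⟨hpart1, ?_, ?_⟩
  · intro g h
    rw [hpart2 g h, hG, keyY]
    field_simp
  · intro g h
    rw [hpart2 g h, keyY, keyX]
    field_simp
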